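/- Let p be a prime, let B be a finite abelian p-group with r = rk(B), and let k ≥ 1 be a natural number. Then Aut_{(k)}(B) is a normal p-subgroup of Aut(B); consequently it is contained in every Sylow p-subgroup of Aut(B), and for any Sylow p-subgroup P of Aut(B) one has [P : Aut_{(k)}(B)] ≤ p^(k·r^2). -/

import Mathlib

/-- The subgroup of `p ^ k`-th powers of a (multiplicatively written) commutative group. -/
def pkPowers (p k : ℕ) (B : Type*) [CommGroup B] : Subgroup B :=
  (powMonoidHom (p ^ k) : B →* B).range

/-- `Aut_{(k)}(B)`: the subgroup of `Aut(B)` consisting of those automorphisms `φ` such that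
`φ g * g⁻¹` is a `p ^ k`-th power for every `g ∈ B`. -/
def autk (p k : ℕ) (B : Type*) [CommGroup B] : Subgroup (MulAut B) where
  carrier := {φ : MulAut B | ∀ g : B, φ g * g⁻¹ ∈ pkPowers p k B}
  one_mem' := by
    intro g
    simpa using (pkPowers p k B).one_mem
  mul_mem' := by
    intro a b ha hb g
    have h : (a * b) g * g⁻¹ = a (b g) * (b g)⁻¹ * (b g * g⁻¹) := by
      rw [MulAut.mul_apply]; group
    rw [h]
    exact mul_mem (ha (b g)) (hb g)
  inv_mem' := by
    intro a ha g
    have h := ha (a⁻¹ g)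
    rw [MulAut.apply_inv_self] at h
    simpa [mul_inv_rev] using inv_mem h

section Aux

variable {p k : ℕ} {B : Type*} [CommGroup B]

lemma mem_pkPowers {j : ℕ} {x : B} : x ∈ pkPowers p j B ↔ ∃ b : B, b ^ p ^ j = x :=
  Iff.rfl

lemma pkPowers_antitone {i j : ℕ} (h : i ≤ j) : pkPowers p j B ≤ pkPowers p i B := by
  rintro x ⟨b, rfl⟩
  refine ⟨b ^ p ^ (j - i), ?_⟩
  show (b ^ p ^ (j - i)) ^ p ^ i = b ^ p ^ j
  rw [← pow_mul, ← pow_add, Nat.sub_add_cancel h]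

lemma map_mem_pkPowers (σ : MulAut B) {j : ℕ} {x : B} (hx : x ∈ pkPowers p j B) :
    σ x ∈ pkPowers p j B := by
  obtain ⟨b, rfl⟩ := hx
  exact ⟨σ b, (map_pow σ b (p ^ j)).symm⟩

lemma autk_pow_step (hp : p.Prime) (hk : 1 ≤ k) {φ : MulAut B} (hφ : φ ∈ autk p k B) :
    φ ^ p ∈ autk p (k + 1) B := by
  classical
  set A := Additive B
  -- the "difference" endomorphism
  set D : AddMonoid.End A := AddMonoidHom.mk'
      (fun a => Additive.ofMul (φ a.toMul * a.toMul⁻¹))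
      (by
        intro a b
        rw [← ofMul_mul]
        show φ (a.toMul * b.toMul) * (a.toMul * b.toMul)⁻¹ = _
        rw [map_mul, mul_inv]
        exact mul_mul_mul_comm _ _ _ _) with hD
  set Φ : AddMonoid.End A := AddMonoidHom.mk'
      (fun a => Additive.ofMul (φ a.toMul))
      (by intro a b; rw [← ofMul_mul]; exact congrArg Additive.ofMul (map_mul φ _ _)) with hΦdef
  have happly : ∀ a : A, D a = Additive.ofMul (φ a.toMul * a.toMul⁻¹) := fun a => rfl
  have hmul : ∀ (f g : AddMonoid.End A) (x : A), (f * g) x = f (g x) := fun f g x => rfl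
  have hΦ : Φ = 1 + D := by
    refine AddMonoidHom.ext fun a => ?_
    show Additive.ofMul (φ a.toMul) = a + D a
    apply Additive.toMul.injective
    rw [happly]
    show φ a.toMul = a.toMul * (φ a.toMul * a.toMul⁻¹)
    rw [mul_comm a.toMul, mul_assoc, inv_mul_cancel, mul_one]
  -- membership target subgroups, additively
  set S : ℕ → AddSubgroup A := fun j => Subgroup.toAddSubgroup (pkPowers p j B) with hS
  have hSmem : ∀ (j : ℕ) (a : A), a ∈ S j ↔ a.toMul ∈ pkPowers p j B := fun _ _ => Iff.rfl
  have hDmem : ∀ (j : ℕ) (a : A), a ∈ S j → D a ∈ S (j + k) := by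
    intro j a ha
    rw [hSmem] at ha ⊢
    obtain ⟨b, hb⟩ := ha
    obtain ⟨c, hc⟩ := hφ b
    simp only [powMonoidHom_apply] at hb hc
    show φ a.toMul * a.toMul⁻¹ ∈ _
    refine ⟨c, ?_⟩
    show c ^ p ^ (j + k) = φ a.toMul * a.toMul⁻¹
    rw [← hb, map_pow, ← inv_pow, ← mul_pow, ← hc, ← pow_mul, ← pow_add, Nat.add_comm j k]
  have hDmem0 : ∀ a : A, D a ∈ S k := by
    intro a
    rw [hSmem]
    exact hφ a.toMul
  have hpowmem : ∀ (i : ℕ) (a : A), 1 ≤ i → (D ^ i) a ∈ S k := by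
    intro i a hi
    obtain ⟨i, rfl⟩ := Nat.exists_eq_add_of_le hi
    rw [add_comm, pow_succ', hmul]
    exact hDmem0 _
  -- apply powers of Φ compute the powers of φ
  have hpow : ∀ (n : ℕ) (a : A), (Φ ^ n) a = Additive.ofMul ((φ ^ n) a.toMul) := by
    intro n
    induction n with
    | zero => intro a; simp
    | succ n ih =>
      intro a
      rw [pow_succ, hmul, pow_succ, MulAut.mul_apply]
      exact ih (Φ a)
  intro g
  set a : A := Additive.ofMul g with ha
  have key : (Φ ^ p) a - a ∈ S (k + 1) := by
    have hexp : Φ ^ p = ∑ i ∈ Finset.range (p + 1),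
        D ^ i * (1 : AddMonoid.End A) ^ (p - i) * (p.choose i : AddMonoid.End A) := by
      rw [hΦ, add_comm (1 : AddMonoid.End A) D, Commute.add_pow (Commute.one_right D)]
    have heval : (Φ ^ p) a = ∑ i ∈ Finset.range (p + 1), p.choose i • ((D ^ i) a) := by
      rw [hexp, show ∀ (s : Finset ℕ) (f : ℕ → AddMonoid.End A), (∑ i ∈ s, f i) a = ∑ i ∈ s, f i a from
        fun s f => AddMonoidHom.finsetSum_apply f s a]
      refine Finset.sum_congr rfl fun i _ => ?_
      rw [one_pow, mul_one, hmul, AddMonoid.End.natCast_apply, map_nsmul]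
    have heval' : (Φ ^ p) a - a =
        ∑ i ∈ Finset.range p, p.choose (i + 1) • ((D ^ (i + 1)) a) := by
      rw [heval, Finset.sum_range_succ']
      simp
    rw [heval']
    refine AddSubgroup.sum_mem _ fun i hi => ?_
    rw [Finset.mem_range] at hi
    rcases lt_or_eq_of_le (Nat.succ_le_of_lt hi) with hip | hip
    · -- 1 ≤ i+1 < p : use p ∣ choose
      obtain ⟨c, hc⟩ := hp.dvd_choose_self (Nat.succ_ne_zero i) hip
      have hm := hpowmem (i + 1) a (Nat.le_add_left 1 i)
      rw [hSmem] at hm ⊢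
      obtain ⟨b, hb⟩ := hm
      rw [toMul_nsmul, ← hb, hc]
      refine ⟨b ^ c, ?_⟩
      show (b ^ c) ^ p ^ (k + 1) = (b ^ p ^ k) ^ (p * c)
      rw [← pow_mul, ← pow_mul]
      congr 1
      ring
    · -- i+1 = p : use D twice
      have h2 : (D ^ (i + 1)) a = D ((D ^ i) a) := by
        rw [pow_succ', hmul]
      have hi1 : 1 ≤ i := by
        have := hp.two_le; omega
      have := hDmem k _ (hpowmem i a hi1)
      rw [← h2] at this
      have hle : ∀ x : A, x ∈ S (k + k) → x ∈ S (k + 1) := fun x hx =>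
        (hSmem _ x).mpr (pkPowers_antitone (by omega) ((hSmem _ x).mp hx))
      have := hle _ this
      rw [← hip, Nat.choose_self, one_nsmul]
      exact this
  rw [hSmem, toMul_sub] at key
  have : ((Φ ^ p) a).toMul = (φ ^ p) g := by rw [hpow]; rfl
  rw [this] at key
  rw [div_eq_mul_inv] at key
  exact key

lemma autk_pow_iter (hp : p.Prime) (hk : 1 ≤ k) {φ : MulAut B} (hφ : φ ∈ autk p k B) :
    ∀ m : ℕ, φ ^ p ^ m ∈ autk p (k + m) B := by
  intro m
  induction m with
  | zero => simpa using hφ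
  | succ m ih =>
    have h1 : (1 : ℕ) ≤ k + m := by omega
    have := autk_pow_step hp h1 ih
    rw [← pow_mul, ← pow_succ] at this
    exact this

lemma autk_eq_one {n j : ℕ} (hn : ∀ g : B, g ^ p ^ n = 1) (hnj : n ≤ j) {φ : MulAut B}
    (hφ : φ ∈ autk p j B) : φ = 1 := by
  ext g
  obtain ⟨b, hb⟩ := hφ g
  simp only [powMonoidHom_apply] at hb
  have hb1 : b ^ p ^ j = 1 := by
    have h : b ^ p ^ j = (b ^ p ^ (j - n)) ^ p ^ n := by
      rw [← pow_mul, ← pow_add, Nat.sub_add_cancel hnj]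
    rw [h, hn]
  rw [hb1] at hb
  have : φ g = g := (mul_inv_eq_one).mp hb.symm
  simpa using this

lemma card_mulAut_le (G : Type*) [Group G] [Finite G] :
    Nat.card (MulAut G) ≤ Nat.card G ^ Group.rank G := by
  obtain ⟨S, hS, hSc⟩ := Group.rank_spec G
  have hinj : Function.Injective (fun (σ : MulAut G) => (fun s : S => σ s)) := by
    intro σ τ h
    have : (σ : G →* G) = τ := MonoidHom.eq_of_eqOn_dense hSc
      (fun s hs => congrFun h ⟨s, hs⟩)
    ext g
    exact DFunLike.congr_fun this g
  calc Nat.card (MulAut G) ≤ Nat.card (S → G) := Nat.card_le_card_of_injective _ hinj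
    _ = Nat.card G ^ S.card := by rw [Nat.card_fun, Nat.card_eq_finsetCard]
    _ = Nat.card G ^ Group.rank G := by rw [hS]

lemma card_le_of_exponent (G : Type*) [CommGroup G] [Finite G] {m : ℕ} (hm0 : m ≠ 0)
    (hm : ∀ g : G, g ^ m = 1) : Nat.card G ≤ m ^ Group.rank G := by
  classical
  haveI : NeZero m := ⟨hm0⟩
  obtain ⟨S, hS, hSc⟩ := Group.rank_spec G
  let ϕ : ∀ _ : S, Multiplicative (ZMod m) →* G := fun s =>
    AddMonoidHom.toMultiplicativeLeft (ZMod.lift m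
      ⟨zmultiplesHom (Additive G) (Additive.ofMul (s : G)), by
        apply Additive.toMul.injective
        show ((m : ℤ) • Additive.ofMul (s : G)).toMul = (0 : Additive G).toMul
        rw [toMul_zsmul, toMul_ofMul, zpow_natCast, hm]
        rfl⟩)
  let F : (S → Multiplicative (ZMod m)) →* G :=
    MonoidHom.noncommPiCoprod ϕ (fun i j _ x y => Commute.all _ _)
  have hkey : ∀ i : S, ϕ i (Multiplicative.ofAdd (1 : ZMod m)) = (i : G) := by
    intro i
    simp only [ϕ, AddMonoidHom.coe_toMultiplicativeLeft, Function.comp_apply, toAdd_ofAdd]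
    have h1 : (1 : ZMod m) = ((1 : ℤ) : ZMod m) := by norm_cast
    rw [h1, ZMod.lift_coe]
    show ((1 : ℤ) • Additive.ofMul (i : G)).toMul = (i : G)
    rw [one_zsmul, toMul_ofMul]
  have hsurj : Function.Surjective F := by
    rw [← MonoidHom.range_eq_top, ← top_le_iff, ← hSc, Subgroup.closure_le]
    intro s hs
    refine ⟨Pi.mulSingle ⟨s, hs⟩ (Multiplicative.ofAdd (1 : ZMod m)), ?_⟩
    rw [show F (Pi.mulSingle ⟨s, hs⟩ (Multiplicative.ofAdd (1 : ZMod m))) =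
      ϕ ⟨s, hs⟩ (Multiplicative.ofAdd (1 : ZMod m)) from
      MonoidHom.noncommPiCoprod_mulSingle _ _ _, hkey]
  calc Nat.card G ≤ Nat.card (S → Multiplicative (ZMod m)) :=
        Nat.card_le_card_of_surjective F hsurj
    _ = Nat.card (Multiplicative (ZMod m)) ^ S.card := by
        rw [Nat.card_fun, Nat.card_eq_finsetCard]
    _ = m ^ Group.rank G := by
        rw [hS]
        congr 1
        simp [Nat.card_zmod]

end Aux

open Pointwise in
theorem stmt_9 (p : ℕ) (hp : p.Prime) (B : Type*) [CommGroup B] [Finite B]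
    (hB : IsPGroup p B) (r : ℕ) (hr : r = Group.rank B) (k : ℕ) (hk : 1 ≤ k) :
    (autk p k B).Normal ∧ IsPGroup p (autk p k B) ∧
      ∀ P : Sylow p (MulAut B), autk p k B ≤ (P : Subgroup (MulAut B)) ∧
        (autk p k B).relIndex (P : Subgroup (MulAut B)) ≤ p ^ (k * r ^ 2) := by
  haveI : Fact p.Prime := ⟨hp⟩
  -- Normality
  have hnormal : (autk p k B).Normal := by
    constructor
    intro φ hφ σ g
    have h : (σ * φ * σ⁻¹) g * g⁻¹ = σ (φ (σ⁻¹ g) * (σ⁻¹ g)⁻¹) := by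
      rw [map_mul, map_inv, MulAut.mul_apply, MulAut.mul_apply, MulAut.apply_inv_self]
    rw [h]
    exact map_mem_pkPowers σ (hφ _)
  -- exponent of B
  obtain ⟨n, hn⟩ := IsPGroup.iff_card.mp hB
  have hexp : ∀ g : B, g ^ p ^ n = 1 := fun g => by rw [← hn]; exact pow_card_eq_one'
  -- p-group
  have hpg : IsPGroup p (autk p k B) := by
    intro φ
    refine ⟨n, ?_⟩
    have h := autk_pow_iter hp hk φ.2 n
    have h1 : (φ : MulAut B) ^ p ^ n = 1 := autk_eq_one hexp (by omega) h
    exact Subtype.ext (by simpa using h1)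
  refine ⟨hnormal, hpg, fun P => ?_⟩
  haveI := hnormal
  -- contained in every Sylow subgroup
  obtain ⟨R, hR⟩ := hpg.exists_le_sylow
  obtain ⟨g, hg⟩ := MulAction.exists_smul_eq (MulAut B) R P
  have hle : autk p k B ≤ (P : Subgroup (MulAut B)) := by
    calc autk p k B = MulAut.conj g • autk p k B := (Subgroup.Normal.conj_smul_eq_self g _).symm
      _ ≤ MulAut.conj g • (R : Subgroup (MulAut B)) :=
          Subgroup.pointwise_smul_le_pointwise_smul_iff.mpr hR
      _ = ((g • R : Sylow p (MulAut B)) : Subgroup (MulAut B)) := rfl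
      _ = (P : Subgroup (MulAut B)) := by rw [hg]
  refine ⟨hle, ?_⟩
  -- the index bound
  set N := pkPowers p k B with hN
  have hmapN : ∀ σ : MulAut B, Subgroup.map (σ : B →* B) N = N := by
    intro σ
    apply le_antisymm
    · rintro x ⟨y, hy, rfl⟩
      exact map_mem_pkPowers σ hy
    · intro x hx
      exact ⟨σ⁻¹ x, map_mem_pkPowers σ⁻¹ hx, by simp⟩
  let f : MulAut B →* MulAut (B ⧸ N) :=
    { toFun := fun σ => QuotientGroup.congr N N (σ : B ≃* B) (hmapN σ)
      map_one' := by
        refine DFunLike.ext _ _ fun q => ?_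
        induction q using QuotientGroup.induction_on with
        | H x => simp [QuotientGroup.congr_mk]
      map_mul' := by
        intro σ τ
        refine DFunLike.ext _ _ fun q => ?_
        induction q using QuotientGroup.induction_on with
        | H x => simp [QuotientGroup.congr_mk, MulAut.mul_apply]  }
  have hker : f.ker = autk p k B := by
    ext φ
    constructor
    · intro hφ g
      have h1 : f φ (QuotientGroup.mk g) = QuotientGroup.mk g := by
        rw [MonoidHom.mem_ker.mp hφ]; rfl
      have h2 : (QuotientGroup.mk (φ g) : B ⧸ N) = QuotientGroup.mk g := h1
      have h3 := QuotientGroup.eq.mp h2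
      have h4 := inv_mem h3
      rw [mul_inv_rev, inv_inv] at h4
      rw [mul_comm] at h4
      exact h4
    · intro hφ
      rw [MonoidHom.mem_ker]
      refine DFunLike.ext _ _ fun q => ?_
      induction q using QuotientGroup.induction_on with
      | H x =>
        show (QuotientGroup.congr N N (φ : B ≃* B) (hmapN φ)) (QuotientGroup.mk x)
            = QuotientGroup.mk x
        rw [QuotientGroup.congr_mk]
        refine QuotientGroup.eq.mpr ?_
        have h4 := inv_mem (hφ x)
        rw [mul_inv_rev, inv_inv] at h4
        rw [mul_comm] at h4
        exact h4
  have hQexp : ∀ q : B ⧸ N, q ^ p ^ k = 1 := by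
    intro q
    induction q using QuotientGroup.induction_on with
    | H x =>
      rw [← QuotientGroup.mk_pow]
      exact (QuotientGroup.eq_one_iff _).mpr ⟨x, rfl⟩
  have hrank : Group.rank (B ⧸ N) ≤ r := by
    rw [hr]
    exact Group.rank_le_of_surjective (QuotientGroup.mk' N) (QuotientGroup.mk'_surjective N)
  have hcardQ : Nat.card (B ⧸ N) ≤ (p ^ k) ^ Group.rank (B ⧸ N) :=
    card_le_of_exponent _ (pow_ne_zero k hp.ne_zero) hQexp
  have h1 : Nat.card ((P : Subgroup (MulAut B)).map f) ≤ Nat.card (MulAut (B ⧸ N)) :=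
    Subgroup.card_le_card_group _
  have h2 : Nat.card (MulAut (B ⧸ N)) ≤ Nat.card (B ⧸ N) ^ Group.rank (B ⧸ N) :=
    card_mulAut_le _
  calc (autk p k B).relIndex (P : Subgroup (MulAut B))
      = Nat.card ((P : Subgroup (MulAut B)).map f) := by rw [← hker, Subgroup.relIndex_ker]
    _ ≤ Nat.card (B ⧸ N) ^ Group.rank (B ⧸ N) := le_trans h1 h2
    _ ≤ ((p ^ k) ^ Group.rank (B ⧸ N)) ^ Group.rank (B ⧸ N) :=
        Nat.pow_le_pow_left hcardQ _
    _ = p ^ (k * Group.rank (B ⧸ N) * Group.rank (B ⧸ N)) := by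
        rw [← pow_mul, ← pow_mul, mul_assoc]
    _ ≤ p ^ (k * r ^ 2) := by
        refine Nat.pow_le_pow_right hp.pos ?_
        have h3 : k * Group.rank (B ⧸ N) * Group.rank (B ⧸ N) ≤ k * r * r :=
          Nat.mul_le_mul (Nat.mul_le_mul_left k hrank) hrank
        rw [pow_two, ← mul_assoc]
        exact h3
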